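/- Let n and x be natural numbers with x ≤ n, and let τ be the unique real number in (0,1) with I_n(τ, x) = I_n(1 − τ, n − x). Then (x+1)/(n+3) < τ < (x+2)/(n+3). More precisely: if 2x < n then (x+1)/(n+2) < τ < (x+2)/(n+3), and if 2x > n then (x+1)/(n+3) < τ < (x+1)/(n+2). -/

import Mathlib

open intervalIntegral Set Real MeasureTheory

/-- `I_n(a, x) = a^{x+2} ∫₀¹ t^{x+1} (1 − t) (1 − a t)^{n−x} dt`. -/
noncomputable def In (n x : ℕ) (a : ℝ) : ℝ :=
  a ^ (x + 2) * ∫ t in (0 : ℝ)..1, t ^ (x + 1) * (1 - t) * (1 - a * t) ^ (n - x)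

noncomputable def AA (x k : ℕ) (t : ℝ) : ℝ := ∫ s in (0:ℝ)..t, s^(x+1) * (1-s)^k * (t-s)
noncomputable def BB (x k : ℕ) (t : ℝ) : ℝ := ∫ s in t..(1:ℝ), s^x * (1-s)^(k+1) * (s-t)

/-- fundamental theorem of calculus for Beta-type kernels -/
lemma ftcBeta (p q : ℕ) (a b : ℝ) :
    ∫ s in a..b, (((p:ℝ)+1)*s^p*(1-s)^(q+1) - ((q:ℝ)+1)*s^(p+1)*(1-s)^q)
      = b^(p+1)*(1-b)^(q+1) - a^(p+1)*(1-a)^(q+1) := by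
  have h : ∀ s ∈ uIcc a b, HasDerivAt (fun s : ℝ => s^(p+1)*(1-s)^(q+1))
      (((p:ℝ)+1)*s^p*(1-s)^(q+1) - ((q:ℝ)+1)*s^(p+1)*(1-s)^q) s := by
    intro s _
    have h1 : HasDerivAt (fun s : ℝ => s^(p+1)) (((p:ℝ)+1)*s^p) s := by
      simpa using hasDerivAt_pow (p+1) s
    have h2 : HasDerivAt (fun s : ℝ => (1-s)^(q+1)) (-(((q:ℝ)+1)*(1-s)^q)) s := by
      have h3 : HasDerivAt (fun s : ℝ => 1-s) (-1) s := by
        simpa using (hasDerivAt_id s).const_sub 1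
      have := h3.fun_pow (q+1)
      simpa [mul_comm, mul_assoc] using this
    have := h1.mul h2
    refine this.congr_deriv ?_
    ring
  rw [integral_eq_sub_of_hasDerivAt h (by apply Continuous.intervalIntegrable; fun_prop)]

lemma conv1 (x k : ℕ) (τ : ℝ) : AA x k τ = τ * In (x+k) x τ := by
  have h := intervalIntegral.smul_integral_comp_mul_left
    (fun s : ℝ => s^(x+1) * (1-s)^k * (τ-s)) (a := 0) (b := 1) τ
  rw [mul_zero, mul_one] at h
  rw [AA, ← h, In, Nat.add_sub_cancel_left, smul_eq_mul]
  congr 1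
  rw [← intervalIntegral.integral_const_mul]
  apply intervalIntegral.integral_congr
  intro t _
  simp only
  ring

lemma conv2 (x k : ℕ) (τ : ℝ) : BB x k τ = (1-τ) * In (x+k) k (1-τ) := by
  have h := intervalIntegral.smul_integral_comp_mul_add
    (fun s : ℝ => s^x * (1-s)^(k+1) * (s-τ)) (a := 0) (b := 1) (τ-1) 1
  rw [mul_zero, zero_add, mul_one, show τ-1+1 = τ by ring] at h
  have h2 : (∫ s in (1:ℝ)..τ, s^x * (1-s)^(k+1) * (s-τ)) = - BB x k τ := by
    rw [BB, intervalIntegral.integral_symm]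
  rw [h2] at h
  have h3 : BB x k τ = (1-τ) • ∫ t in (0:ℝ)..1,
      ((τ-1) * t + 1)^x * (1 - ((τ-1) * t + 1))^(k+1) * ((τ-1) * t + 1 - τ) := by
    have := congrArg Neg.neg h
    rw [neg_neg] at this
    rw [← this, ← neg_smul]
    norm_num
  rw [h3, In, Nat.add_sub_cancel, smul_eq_mul]
  congr 1
  rw [← intervalIntegral.integral_const_mul]
  apply intervalIntegral.integral_congr
  intro t _
  simp only
  rw [show (1 - ((τ-1)*t+1)) = (1-τ)*t by ring, mul_pow]
  ring

/-- Part 1, lower bound: any fixed point exceeds `(x+1)/(x+k+3)`. -/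
lemma lower1 (x k : ℕ) (τ : ℝ) (h0 : 0 < τ) (h1 : τ < 1)
    (hEQ : (1-τ) * AA x k τ = τ * BB x k τ) :
    ((x:ℝ)+1) / ((x:ℝ)+(k:ℝ)+3) < τ := by
  have hK1 : 0 < ∫ s in (0:ℝ)..τ, s^x * (1-s)^k * (τ-s)^2 := by
    apply intervalIntegral_pos_of_pos_on (Continuous.intervalIntegrable (by fun_prop) _ _) _ h0
    intro s hs
    have hs1 : (0:ℝ) < 1 - s := by nlinarith [hs.2]
    have hts : (0:ℝ) < τ - s := by linarith [hs.2]
    exact mul_pos (mul_pos (pow_pos hs.1 x) (pow_pos hs1 k)) (pow_pos hts 2)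
  have hsplit : (∫ s in (0:ℝ)..τ, s^x * (1-s)^k * (τ-s)^2)
      = τ * (∫ s in (0:ℝ)..τ, s^x*(1-s)^(k+1)*(τ-s)) - (1-τ) * AA x k τ := by
    rw [AA, ← intervalIntegral.integral_const_mul, ← intervalIntegral.integral_const_mul,
        ← intervalIntegral.integral_sub (Continuous.intervalIntegrable (by fun_prop) _ _)
          (Continuous.intervalIntegrable (by fun_prop) _ _)]
    apply intervalIntegral.integral_congr
    intro s _
    simp only
    ring
  have hB' : (∫ s in τ..(1:ℝ), s^x*(1-s)^(k+1)*(τ-s)) = - BB x k τ := by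
    rw [BB, ← intervalIntegral.integral_neg]
    apply intervalIntegral.integral_congr
    intro s _
    simp only
    ring
  have hjoin : (∫ s in (0:ℝ)..τ, s^x*(1-s)^(k+1)*(τ-s)) + (∫ s in τ..(1:ℝ), s^x*(1-s)^(k+1)*(τ-s))
      = ∫ s in (0:ℝ)..1, s^x*(1-s)^(k+1)*(τ-s) :=
    intervalIntegral.integral_add_adjacent_intervals
      (Continuous.intervalIntegrable (by fun_prop) _ _)
      (Continuous.intervalIntegrable (by fun_prop) _ _)
  have hKQ : (∫ s in (0:ℝ)..τ, s^x * (1-s)^k * (τ-s)^2)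
      = τ * ∫ s in (0:ℝ)..1, s^x*(1-s)^(k+1)*(τ-s) := by
    rw [hsplit, hEQ, ← hjoin]
    linear_combination (-τ) * hB'
  have hQ : 0 < ∫ s in (0:ℝ)..1, s^x*(1-s)^(k+1)*(τ-s) := by
    rw [hKQ] at hK1
    nlinarith [hK1]
  have hC : (∫ s in (0:ℝ)..1, s^x*(1-s)^(k+1)*(τ-s))
      = τ * (∫ s in (0:ℝ)..1, s^x*(1-s)^(k+1)) - (∫ s in (0:ℝ)..1, s^(x+1)*(1-s)^(k+1)) := by
    rw [← intervalIntegral.integral_const_mul,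
        ← intervalIntegral.integral_sub (Continuous.intervalIntegrable (by fun_prop) _ _)
          (Continuous.intervalIntegrable (by fun_prop) _ _)]
    apply intervalIntegral.integral_congr
    intro s _
    simp only
    ring
  have hmom := ftcBeta x (k+1) 0 1
  have hmom2 : ((x:ℝ)+1) * (∫ s in (0:ℝ)..1, s^x*(1-s)^(k+1))
      = ((x:ℝ)+(k:ℝ)+3) * (∫ s in (0:ℝ)..1, s^(x+1)*(1-s)^(k+1)) := by
    have hre : (∫ s in (0:ℝ)..1, (((x:ℝ)+1)*s^x*(1-s)^(k+1+1) - (((k+1:ℕ):ℝ)+1)*s^(x+1)*(1-s)^(k+1)))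
        = ((x:ℝ)+1) * (∫ s in (0:ℝ)..1, s^x*(1-s)^(k+1))
          - ((x:ℝ)+(k:ℝ)+3) * (∫ s in (0:ℝ)..1, s^(x+1)*(1-s)^(k+1)) := by
      rw [← intervalIntegral.integral_const_mul, ← intervalIntegral.integral_const_mul,
          ← intervalIntegral.integral_sub (Continuous.intervalIntegrable (by fun_prop) _ _)
            (Continuous.intervalIntegrable (by fun_prop) _ _)]
      apply intervalIntegral.integral_congr
      intro s _
      simp only
      push_cast
      ring
    rw [hre] at hmom
    norm_num [zero_pow] at hmom
    linarith [hmom]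
  have hC0 : 0 < ∫ s in (0:ℝ)..1, s^x*(1-s)^(k+1) := by
    apply intervalIntegral_pos_of_pos_on (Continuous.intervalIntegrable (by fun_prop) _ _) _ one_pos
    intro s hs
    have hs1 : (0:ℝ) < 1 - s := by linarith [hs.2]
    exact mul_pos (pow_pos hs.1 x) (pow_pos hs1 (k+1))
  rw [hC] at hQ
  rw [div_lt_iff₀ (by positivity)]
  nlinarith [hQ, hC0, hmom2]

lemma monoA (x k : ℕ) (a b : ℝ) (h0 : 0 ≤ a) (hab : a ≤ b) (hb : b ≤ 1) :
    b * AA x k a ≤ a * AA x k b := by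
  rw [AA, AA, ← intervalIntegral.integral_const_mul, ← intervalIntegral.integral_const_mul]
  have step1 : (∫ s in (0:ℝ)..a, b * (s^(x+1)*(1-s)^k*(a-s)))
      ≤ ∫ s in (0:ℝ)..a, a * (s^(x+1)*(1-s)^k*(b-s)) := by
    apply intervalIntegral.integral_mono_on h0
      (Continuous.intervalIntegrable (by fun_prop) _ _)
      (Continuous.intervalIntegrable (by fun_prop) _ _)
    intro s hs
    have hF : 0 ≤ s^(x+1)*(1-s)^k := by
      have : (0:ℝ) ≤ 1 - s := by linarith [hs.2]
      exact mul_nonneg (pow_nonneg hs.1 (x+1)) (pow_nonneg this k)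
    nlinarith [mul_nonneg hF (mul_nonneg hs.1 (sub_nonneg.2 hab))]
  have step2 : (∫ s in (0:ℝ)..a, a * (s^(x+1)*(1-s)^k*(b-s)))
      ≤ ∫ s in (0:ℝ)..b, a * (s^(x+1)*(1-s)^k*(b-s)) := by
    rw [← intervalIntegral.integral_add_adjacent_intervals (a := (0:ℝ)) (b := a) (c := b)
      (Continuous.intervalIntegrable (by fun_prop) _ _)
      (Continuous.intervalIntegrable (by fun_prop) _ _)]
    have : 0 ≤ ∫ s in a..b, a * (s^(x+1)*(1-s)^k*(b-s)) := by
      apply intervalIntegral.integral_nonneg hab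
      intro s hs
      have h1 : (0:ℝ) ≤ s := le_trans h0 hs.1
      have h2 : (0:ℝ) ≤ 1 - s := by linarith [hs.2]
      have h3 : (0:ℝ) ≤ b - s := by linarith [hs.2]
      exact mul_nonneg h0 (mul_nonneg (mul_nonneg (pow_nonneg h1 (x+1)) (pow_nonneg h2 k)) h3)
    linarith
  linarith

lemma monoB (x k : ℕ) (a b : ℝ) (h0 : 0 ≤ a) (hab : a ≤ b) (hb : b ≤ 1) :
    (1-a) * BB x k b ≤ (1-b) * BB x k a := by
  rw [BB, BB, ← intervalIntegral.integral_const_mul, ← intervalIntegral.integral_const_mul]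
  have step1 : (∫ s in b..(1:ℝ), (1-a) * (s^x*(1-s)^(k+1)*(s-b)))
      ≤ ∫ s in b..(1:ℝ), (1-b) * (s^x*(1-s)^(k+1)*(s-a)) := by
    apply intervalIntegral.integral_mono_on hb
      (Continuous.intervalIntegrable (by fun_prop) _ _)
      (Continuous.intervalIntegrable (by fun_prop) _ _)
    intro s hs
    have hF : 0 ≤ s^x*(1-s)^(k+1) := by
      have h1 : (0:ℝ) ≤ s := le_trans (le_trans h0 hab) hs.1
      have h2 : (0:ℝ) ≤ 1 - s := by linarith [hs.2]
      exact mul_nonneg (pow_nonneg h1 x) (pow_nonneg h2 (k+1))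
    nlinarith [mul_nonneg hF (mul_nonneg (sub_nonneg.2 hab) (by linarith [hs.2] : (0:ℝ) ≤ 1 - s))]
  have step2 : (∫ s in b..(1:ℝ), (1-b) * (s^x*(1-s)^(k+1)*(s-a)))
      ≤ ∫ s in a..(1:ℝ), (1-b) * (s^x*(1-s)^(k+1)*(s-a)) := by
    rw [← intervalIntegral.integral_add_adjacent_intervals (a := a) (b := b) (c := (1:ℝ))
      (Continuous.intervalIntegrable (by fun_prop) _ _)
      (Continuous.intervalIntegrable (by fun_prop) _ _)]
    have : 0 ≤ ∫ s in a..b, (1-b) * (s^x*(1-s)^(k+1)*(s-a)) := by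
      apply intervalIntegral.integral_nonneg hab
      intro s hs
      have h1 : (0:ℝ) ≤ s := le_trans h0 hs.1
      have h2 : (0:ℝ) ≤ 1 - s := by linarith [hs.2]
      have h3 : (0:ℝ) ≤ s - a := by linarith [hs.1]
      have h4 : (0:ℝ) ≤ 1 - b := by linarith
      exact mul_nonneg h4 (mul_nonneg (mul_nonneg (pow_nonneg h1 x) (pow_nonneg h2 (k+1))) h3)
    linarith
  linarith

lemma stein (x k : ℕ) (m : ℝ) (hrel : ((x:ℝ)+(k:ℝ)+2) * m = (x:ℝ)+1) :
    ((x:ℝ)+(k:ℝ)+2) * (m * BB x k m - (1-m) * AA x k m)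
      = (1-m) * (∫ s in (0:ℝ)..m, s^(x+1)*(1-s)^(k+1))
        - m * (∫ s in m..(1:ℝ), s^(x+1)*(1-s)^(k+1)) := by
  have hF1 := ftcBeta (x+1) k 0 m
  have hF2 := ftcBeta x (k+1) m 1
  norm_num at hF1 hF2
  have piece1 : (∫ s in (0:ℝ)..m, s^(x+1)*(1-s)^(k+1)) + ((x:ℝ)+(k:ℝ)+2) * AA x k m
      = m^(x+2)*(1-m)^(k+1) := by
    have hre : (∫ s in (0:ℝ)..m, (((x+1:ℕ):ℝ)+1)*s^(x+1)*(1-s)^(k+1) - ((k:ℝ)+1)*s^(x+1+1)*(1-s)^k)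
        = (∫ s in (0:ℝ)..m, s^(x+1)*(1-s)^(k+1)) + ((x:ℝ)+(k:ℝ)+2) * AA x k m := by
      rw [AA, ← intervalIntegral.integral_const_mul,
          ← intervalIntegral.integral_add (Continuous.intervalIntegrable (by fun_prop) _ _)
            (Continuous.intervalIntegrable (by fun_prop) _ _)]
      apply intervalIntegral.integral_congr
      intro s _
      simp only
      push_cast
      linear_combination (-(s^(x+1)*(1-s)^k)) * hrel
    rw [← hre]
    rw [show (x+1+1) = x+2 from rfl] at hF1 ⊢
    convert hF1 using 2
    push_cast
    ring
  have piece2 : (∫ s in m..(1:ℝ), s^(x+1)*(1-s)^(k+1)) + ((x:ℝ)+(k:ℝ)+2) * BB x k m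
      = m^(x+1)*(1-m)^(k+2) := by
    have hre : (∫ s in m..(1:ℝ), -((((x:ℕ):ℝ)+1)*s^x*(1-s)^(k+1+1) - (((k+1:ℕ):ℝ)+1)*s^(x+1)*(1-s)^(k+1)))
        = (∫ s in m..(1:ℝ), s^(x+1)*(1-s)^(k+1)) + ((x:ℝ)+(k:ℝ)+2) * BB x k m := by
      rw [BB, ← intervalIntegral.integral_const_mul,
          ← intervalIntegral.integral_add (Continuous.intervalIntegrable (by fun_prop) _ _)
            (Continuous.intervalIntegrable (by fun_prop) _ _)]
      apply intervalIntegral.integral_congr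
      intro s _
      simp only
      push_cast
      linear_combination (s^x*(1-s)^(k+1)) * hrel
    rw [← hre, intervalIntegral.integral_neg]
    rw [show (k+1+1) = k+2 from rfl] at hF2 ⊢
    have := hF2
    push_cast at this ⊢
    linarith [this]
  linear_combination m * piece2 - (1-m) * piece1

lemma philemma (p q m w : ℝ) (hpq : p < q) (hm0 : 0 < m) (hm1 : m < 1)
    (hrel : m * (p + q) = p) (hw0 : 0 < w) (hw1 : w < 1) :
    0 < p * log (m*w) + q * log (1-m*w) - p * log (1-(1-m)*w) - q * log ((1-m)*w) := by
  set φ : ℝ → ℝ := fun z => p * log (m*z) + q * log (1-m*z) - p * log (1-(1-m)*z) - q * log ((1-m)*z) with hφ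
  have hm1' : 0 < 1 - m := by linarith
  have key : ∀ z, 0 < z → z ≤ 1 → HasDerivAt φ
      ((p-q)*(1-z)/(z*((1-m*z)*(1-(1-m)*z)))) z := by
    intro z hz0 hz1
    have h1 : (0:ℝ) < m * z := by positivity
    have h2 : (0:ℝ) < 1 - m * z := by nlinarith
    have h3 : (0:ℝ) < 1 - (1-m) * z := by nlinarith
    have h4 : (0:ℝ) < (1-m) * z := by positivity
    have d1 : HasDerivAt (fun z : ℝ => log (m*z)) ((m*z)⁻¹ * (m*1)) z :=
      (Real.hasDerivAt_log h1.ne').comp z ((hasDerivAt_id z).const_mul m)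
    have d2 : HasDerivAt (fun z : ℝ => log (1-m*z)) ((1-m*z)⁻¹ * -(m*1)) z :=
      (Real.hasDerivAt_log h2.ne').comp (h := fun z : ℝ => 1 - m*z) z (((hasDerivAt_id z).const_mul m).const_sub 1)
    have d3 : HasDerivAt (fun z : ℝ => log (1-(1-m)*z)) ((1-(1-m)*z)⁻¹ * -((1-m)*1)) z :=
      (Real.hasDerivAt_log h3.ne').comp (h := fun z : ℝ => 1 - (1-m)*z) z (((hasDerivAt_id z).const_mul (1-m)).const_sub 1)
    have d4 : HasDerivAt (fun z : ℝ => log ((1-m)*z)) (((1-m)*z)⁻¹ * ((1-m)*1)) z :=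
      (Real.hasDerivAt_log h4.ne').comp z ((hasDerivAt_id z).const_mul (1-m))
    have := (((d1.const_mul p).add (d2.const_mul q)).sub (d3.const_mul p)).sub (d4.const_mul q)
    refine this.congr_deriv (Eq.symm ?_)
    rw [show (m*z)⁻¹ * (m*1) = z⁻¹ by field_simp,
        show ((1-m)*z)⁻¹ * ((1-m)*1) = z⁻¹ by field_simp]
    rw [div_eq_iff (by positivity), inv_eq_one_div]
    have iz : z⁻¹ * z = 1 := inv_mul_cancel₀ hz0.ne'
    have ia : (1-m*z)⁻¹ * (1-m*z) = 1 := inv_mul_cancel₀ h2.ne'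
    have ib : (1-(1-m)*z)⁻¹ * (1-(1-m)*z) = 1 := inv_mul_cancel₀ h3.ne'
    linear_combination z*hrel - (p-q)*(1-m*z)*(1-(1-m)*z)*iz + q*m*z*(1-(1-m)*z)*ia
      - p*(1-m)*z*(1-m*z)*ib
  have hanti : StrictAntiOn φ (Icc w 1) := by
    apply strictAntiOn_of_deriv_neg (convex_Icc w 1)
    · intro z hz
      exact (key z (lt_of_lt_of_le hw0 hz.1) hz.2).continuousAt.continuousWithinAt
    · intro z hz
      rw [interior_Icc] at hz
      rw [(key z (hw0.trans hz.1) hz.2.le).deriv]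
      apply div_neg_of_neg_of_pos
      · nlinarith [hz.2]
      · have h2 : (0:ℝ) < 1 - m * z := by nlinarith [hz.1, hz.2, hw0]
        have h3 : (0:ℝ) < 1 - (1-m) * z := by nlinarith [hz.1, hz.2, hw0]
        have : (0:ℝ) < z := hw0.trans hz.1
        positivity
  have h10 : φ 1 = 0 := by
    simp only [hφ, mul_one]
    rw [show (1:ℝ)-(1-m) = m by ring]
    ring
  have := hanti ⟨le_rfl, hw1.le⟩ ⟨hw1.le, le_rfl⟩ hw1
  rw [h10] at this
  exact this

lemma ptwise (x k : ℕ) (hxk : x < k) (m w : ℝ) (hm0 : 0 < m) (hm1 : m < 1)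
    (hrel : m * (((x:ℝ)+1) + ((k:ℝ)+1)) = (x:ℝ)+1) (hw0 : 0 < w) (hw1 : w < 1) :
    (1-(1-m)*w)^(x+1) * ((1-m)*w)^(k+1) < (m*w)^(x+1) * (1-m*w)^(k+1) := by
  have hpq : ((x:ℝ)+1) < ((k:ℝ)+1) := by
    have : (x:ℝ) < (k:ℝ) := by exact_mod_cast hxk
    linarith
  have key := philemma ((x:ℝ)+1) ((k:ℝ)+1) m w hpq hm0 hm1 hrel hw0 hw1
  have h1 : (0:ℝ) < m * w := by positivity
  have h2 : (0:ℝ) < 1 - m * w := by nlinarith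
  have h3 : (0:ℝ) < 1 - (1-m) * w := by nlinarith
  have h4 : (0:ℝ) < (1-m) * w := by nlinarith
  rw [← Real.log_lt_log_iff (by positivity) (by positivity)]
  rw [Real.log_mul (by positivity) (by positivity), Real.log_mul (by positivity) (by positivity),
      Real.log_pow, Real.log_pow, Real.log_pow, Real.log_pow]
  push_cast
  linarith [key]

lemma pairing (x k : ℕ) (hxk : x < k) (m : ℝ) (hm0 : 0 < m) (hm1 : m < 1)
    (hrel : m * (((x:ℝ)+1) + ((k:ℝ)+1)) = (x:ℝ)+1) :
    0 < (1-m) * (∫ s in (0:ℝ)..m, s^(x+1)*(1-s)^(k+1))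
        - m * (∫ s in m..(1:ℝ), s^(x+1)*(1-s)^(k+1)) := by
  have hG : (∫ s in (0:ℝ)..m, s^(x+1)*(1-s)^(k+1))
      = m * ∫ w in (0:ℝ)..1, (m*w)^(x+1)*(1-m*w)^(k+1) := by
    have h := intervalIntegral.smul_integral_comp_mul_left
      (fun s : ℝ => s^(x+1)*(1-s)^(k+1)) (a := 0) (b := 1) m
    rw [mul_zero, mul_one] at h
    rw [← h, smul_eq_mul]
  have hH : (∫ s in m..(1:ℝ), s^(x+1)*(1-s)^(k+1))
      = (1-m) * ∫ w in (0:ℝ)..1, (1-(1-m)*w)^(x+1)*((1-m)*w)^(k+1) := by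
    have h := intervalIntegral.smul_integral_comp_mul_add
      (fun s : ℝ => s^(x+1)*(1-s)^(k+1)) (a := 0) (b := 1) (m-1) 1
    rw [mul_zero, zero_add, mul_one, show m-1+1 = m by ring] at h
    have h2 : (∫ s in (1:ℝ)..m, s^(x+1)*(1-s)^(k+1)) = - ∫ s in m..(1:ℝ), s^(x+1)*(1-s)^(k+1) := by
      rw [intervalIntegral.integral_symm]
    rw [h2] at h
    have := congrArg Neg.neg h
    rw [neg_neg] at this
    rw [← this, ← neg_smul, smul_eq_mul]
    have hcong : (∫ t in (0:ℝ)..1, ((m-1)*t+1)^(x+1)*(1-((m-1)*t+1))^(k+1))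
        = ∫ w in (0:ℝ)..1, (1-(1-m)*w)^(x+1)*((1-m)*w)^(k+1) := by
      apply intervalIntegral.integral_congr
      intro t _
      simp only
      rw [show ((m-1)*t+1) = 1-(1-m)*t by ring, show (1-(1-(1-m)*t)) = (1-m)*t by ring]
    rw [hcong]
    ring
  rw [hG, hH]
  have hpos : 0 < ∫ w in (0:ℝ)..1, ((m*w)^(x+1)*(1-m*w)^(k+1) - (1-(1-m)*w)^(x+1)*((1-m)*w)^(k+1)) := by
    apply intervalIntegral_pos_of_pos_on (Continuous.intervalIntegrable (by fun_prop) _ _) _ one_pos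
    intro w hw
    have := ptwise x k hxk m w hm0 hm1 hrel hw.1 hw.2
    linarith
  rw [intervalIntegral.integral_sub (Continuous.intervalIntegrable (by fun_prop) _ _)
    (Continuous.intervalIntegrable (by fun_prop) _ _)] at hpos
  nlinarith [hpos, mul_pos (mul_pos hm0 (by linarith : (0:ℝ) < 1-m)) hpos]

/-- Part 2, lower bound under `x < k`: any fixed point exceeds `(x+1)/(x+k+2)`. -/
lemma lower2 (x k : ℕ) (hxk : x < k) (τ : ℝ) (h0 : 0 < τ) (h1 : τ < 1)
    (hEQ : (1-τ) * AA x k τ = τ * BB x k τ) :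
    ((x:ℝ)+1) / ((x:ℝ)+(k:ℝ)+2) < τ := by
  set m : ℝ := ((x:ℝ)+1) / ((x:ℝ)+(k:ℝ)+2) with hm
  have hden : (0:ℝ) < (x:ℝ)+(k:ℝ)+2 := by positivity
  have hm0 : 0 < m := by positivity
  have hm1 : m < 1 := by
    rw [hm, div_lt_one hden]
    have : (0:ℝ) ≤ (k:ℝ) := Nat.cast_nonneg k
    linarith
  have hrel : ((x:ℝ)+(k:ℝ)+2) * m = (x:ℝ)+1 := by
    rw [hm]
    field_simp
  have hrel2 : m * (((x:ℝ)+1) + ((k:ℝ)+1)) = (x:ℝ)+1 := by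
    rw [show ((x:ℝ)+1) + ((k:ℝ)+1) = (x:ℝ)+(k:ℝ)+2 by ring, mul_comm]
    exact hrel
  by_contra hc
  push_neg at hc
  have key : (1-m) * AA x k m < m * BB x k m := by
    have h1' := stein x k m hrel
    have h2' := pairing x k hxk m hm0 hm1 hrel2
    nlinarith [h1', h2']
  have m1 : m * AA x k τ ≤ τ * AA x k m := monoA x k τ m h0.le hc hm1.le
  have m2 : (1-τ) * BB x k m ≤ (1-m) * BB x k τ := monoB x k τ m h0.le hc hm1.le
  have e2 : ((1-m)*(1-τ)) * (m * AA x k τ) ≤ ((1-m)*(1-τ)) * (τ * AA x k m) :=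
    mul_le_mul_of_nonneg_left m1 (by nlinarith)
  have e3 : (τ*(1-τ)) * ((1-m) * AA x k m) < (τ*(1-τ)) * (m * BB x k m) :=
    mul_lt_mul_of_pos_left key (by nlinarith)
  have e4 : (τ*m) * ((1-τ) * BB x k m) ≤ (τ*m) * ((1-m) * BB x k τ) :=
    mul_le_mul_of_nonneg_left m2 (by positivity)
  have e1 : m*(1-m)*((1-τ)*AA x k τ) = m*(1-m)*(τ*BB x k τ) := by rw [hEQ]
  nlinarith [e1, e2, e3, e4]

lemma master (x k : ℕ) (τ : ℝ) (h0 : 0 < τ) (h1 : τ < 1)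
    (heq : In (x+k) x τ = In (x+k) k (1-τ)) :
    ((x:ℝ)+1) / ((x:ℝ)+(k:ℝ)+3) < τ ∧ (x < k → ((x:ℝ)+1) / ((x:ℝ)+(k:ℝ)+2) < τ) := by
  have hEQ : (1-τ) * AA x k τ = τ * BB x k τ := by
    rw [conv1, conv2, heq]
    ring
  exact ⟨lower1 x k τ h0 h1 hEQ, fun hxk => lower2 x k hxk τ h0 h1 hEQ⟩

/-- Part (2) of Theorem 3: bounds for the iterative Bayes estimate `τ = p̂_IB(x)`. -/
theorem In_fixed_point_bounds (n x : ℕ) (hx : x ≤ n)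
    (τ : ℝ) (hτ : τ ∈ Set.Ioo (0 : ℝ) 1)
    (heq : In n x τ = In n (n - x) (1 - τ)) :
    (((x : ℝ) + 1) / ((n : ℝ) + 3) < τ ∧ τ < ((x : ℝ) + 2) / ((n : ℝ) + 3)) ∧
    (2 * x < n → ((x : ℝ) + 1) / ((n : ℝ) + 2) < τ ∧ τ < ((x : ℝ) + 2) / ((n : ℝ) + 3)) ∧
    (2 * x > n → ((x : ℝ) + 1) / ((n : ℝ) + 3) < τ ∧ τ < ((x : ℝ) + 1) / ((n : ℝ) + 2)) := by
  obtain ⟨h0, h1⟩ := hτ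
  obtain ⟨k, rfl⟩ : ∃ k, n = x + k := ⟨n - x, (Nat.add_sub_cancel' hx).symm⟩
  rw [Nat.add_sub_cancel_left] at heq
  have heq2 : In (k+x) k (1-τ) = In (k+x) x (1-(1-τ)) := by
    rw [add_comm k x, show 1-(1-τ) = τ by ring]
    exact heq.symm
  have M1 := master x k τ h0 h1 heq
  have M2 := master k x (1-τ) (by linarith) (by linarith) heq2
  have hcast : ((x+k : ℕ) : ℝ) = (x:ℝ) + (k:ℝ) := by push_cast; ring
  rw [hcast]
  have c1 : ((x:ℝ)+1) / ((x:ℝ)+(k:ℝ)+3) < τ := M1.1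
  have c2 : τ < ((x:ℝ)+2) / ((x:ℝ)+(k:ℝ)+3) := by
    have h := M2.1
    have hd : (0:ℝ) < (x:ℝ)+(k:ℝ)+3 := by positivity
    rw [div_lt_iff₀ (by linarith : (0:ℝ) < (k:ℝ)+(x:ℝ)+3)] at h
    rw [lt_div_iff₀ hd]
    linarith
  refine ⟨⟨c1, c2⟩, fun h2x => ⟨?_, c2⟩, fun h2x => ⟨c1, ?_⟩⟩
  · exact M1.2 (by omega)
  · have h := M2.2 (by omega)
    have hd : (0:ℝ) < (x:ℝ)+(k:ℝ)+2 := by positivity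
    rw [div_lt_iff₀ (by linarith : (0:ℝ) < (k:ℝ)+(x:ℝ)+2)] at h
    rw [lt_div_iff₀ hd]
    linarith
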